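/- Let F be a group and φ₁, φ₂ ∈ Aut(F), with suspensions G₁ = F ⋊_{φ₁} ℤ and G₂ = F ⋊_{φ₂} ℤ and fibers ι₁(F), ι₂(F). If Ψ : G₁ → G₂ is a group isomorphism with Ψ(ι₁(F)) ≤ ι₂(F) (the fiber is sent inside the fiber), then Ψ(ι₁(F)) = ι₂(F) (the fiber is sent onto the fiber). -/

import Mathlib

open SemidirectProduct

/-- If an isomorphism of suspensions sends the fiber inside the fiber, then it sends
the fiber onto the fiber. -/
theorem fiber_into_fiber_implies_onto
    {F : Type*} [Group F] (φ₁ φ₂ : MulAut F) :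
    let G₁ := F ⋊[zpowersHom (MulAut F) φ₁] Multiplicative ℤ
    let G₂ := F ⋊[zpowersHom (MulAut F) φ₂] Multiplicative ℤ
    let ι₁ : F →* G₁ := SemidirectProduct.inl
    let ι₂ : F →* G₂ := SemidirectProduct.inl
    ∀ Ψ : G₁ ≃* G₂,
      Subgroup.map Ψ.toMonoidHom ι₁.range ≤ ι₂.range →
      Subgroup.map Ψ.toMonoidHom ι₁.range = ι₂.range := by
  intro G₁ G₂ ι₁ ι₂ Ψ h
  -- Ψ sends inl x into the kernel of rightHom
  have hker : ∀ x : F, rightHom (Ψ (ι₁ x)) = 1 := by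
    intro x
    have : Ψ (ι₁ x) ∈ ι₂.range := h ⟨ι₁ x, ⟨x, rfl⟩, rfl⟩
    rw [range_inl_eq_ker_rightHom] at this
    exact this
  -- the induced map on ℤ
  set f : Multiplicative ℤ →* Multiplicative ℤ :=
    (rightHom : G₂ →* Multiplicative ℤ).comp
      (Ψ.toMonoidHom.comp (inr : Multiplicative ℤ →* G₁)) with hf
  have hcomm : ∀ g : G₁, rightHom (Ψ g) = f (rightHom g) := by
    intro g
    conv_lhs => rw [← inl_left_mul_inr_right g]
    simp only [map_mul, hker, one_mul]
    rw [show rightHom (Ψ (inl g.left)) = 1 from hker g.left, one_mul]; rfl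
  -- f is multiplication by n
  set n : ℤ := Multiplicative.toAdd (f (Multiplicative.ofAdd 1)) with hn
  have key : ∀ a : Multiplicative ℤ,
      Multiplicative.toAdd (f a) = n * Multiplicative.toAdd a := by
    intro a
    have ha : a = Multiplicative.ofAdd 1 ^ Multiplicative.toAdd a := by
      rw [← Int.ofAdd_mul]
      simp
    conv_lhs => rw [ha, map_zpow, toAdd_zpow]
    simp [smul_eq_mul, mul_comm, hn]
  -- f is surjective, hence n is a unit
  have hsurj : ∃ z : ℤ, n * z = 1 := by
    obtain ⟨g, hg⟩ := Ψ.surjective (inr (Multiplicative.ofAdd 1))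
    refine ⟨Multiplicative.toAdd (rightHom g), ?_⟩
    have h1 := hcomm g
    rw [hg] at h1
    have h2 : Multiplicative.toAdd (f (rightHom g)) = 1 := by
      rw [← h1]; simp [rightHom_inr]
    rw [key] at h2
    exact h2
  obtain ⟨z, hz⟩ := hsurj
  have hnne : n ≠ 0 := by rintro h0; rw [h0] at hz; simp at hz
  have hfinj : Function.Injective f := by
    intro a b hab
    have : n * Multiplicative.toAdd a = n * Multiplicative.toAdd b := by
      rw [← key, ← key, hab]
    exact Multiplicative.toAdd.injective (mul_left_cancel₀ hnne this)
  -- now prove equality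
  refine le_antisymm h ?_
  rintro y hy
  obtain ⟨x, rfl⟩ := hy
  refine ⟨Ψ.symm (ι₂ x), ?_, by simp⟩
  rw [range_inl_eq_ker_rightHom]
  have h1 : rightHom (Ψ (Ψ.symm (ι₂ x))) = 1 := by
    rw [Ψ.apply_symm_apply]
    have : (ι₂ x) ∈ (rightHom : G₂ →* Multiplicative ℤ).ker := by
      rw [← range_inl_eq_ker_rightHom]; exact ⟨x, rfl⟩
    exact this
  rw [hcomm] at h1
  have h2 : rightHom (Ψ.symm (ι₂ x)) = 1 := hfinj (by rw [h1, map_one])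
  exact MonoidHom.mem_ker.mpr h2
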